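/- arXiv:2604.24691 — 2 statements merged into one kernel-verified Lean document; each statement's English description precedes it below -/
import Mathlib

section
/- For n×n real positive definite symmetric matrices W and Q, the identity (Q^{1/2} W Q^{1/2})^{1/2} = Q^{1/2} W^{1/2} (W^{1/2} Q W^{1/2})^{-1/2} W^{1/2} Q^{1/2} holds. -/
open Matrix

section

open scoped ComplexOrder

/-- The positive semidefinite square root of a positive semidefinite matrix
(the definition `Matrix.PosSemidef.sqrt` of Mathlib of December 2024, since removed). -/
noncomputable def Matrix.PosSemidef.sqrt {n 𝕜 : Type*} [Fintype n] [RCLike 𝕜] [DecidableEq n]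
    {A : Matrix n n 𝕜} (hA : A.PosSemidef) : Matrix n n 𝕜 :=
  hA.1.eigenvectorUnitary.1 * diagonal ((↑) ∘ (√·) ∘ hA.1.eigenvalues) *
    (star hA.1.eigenvectorUnitary : Matrix n n 𝕜)

end

section

open scoped MatrixOrder

lemma Matrix.PosSemidef.sqrt_eq_cfc' {n : Type*} [Fintype n] [DecidableEq n]
    {A : Matrix n n ℝ} (hA : A.PosSemidef) : hA.sqrt = CFC.sqrt A := by
  rw [CFC.sqrt_eq_real_sqrt A hA.nonneg, cfcₙ_eq_cfc, hA.1.cfc_eq]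
  simp [IsHermitian.cfc, PosSemidef.sqrt]

lemma Matrix.PosSemidef.sqrt_mul_self {n : Type*} [Fintype n] [DecidableEq n]
    {A : Matrix n n ℝ} (hA : A.PosSemidef) : hA.sqrt * hA.sqrt = A := by
  rw [hA.sqrt_eq_cfc']; exact CFC.sqrt_mul_sqrt_self A hA.nonneg

lemma Matrix.PosSemidef.posSemidef_sqrt {n : Type*} [Fintype n] [DecidableEq n]
    {A : Matrix n n ℝ} (hA : A.PosSemidef) : hA.sqrt.PosSemidef := by
  rw [hA.sqrt_eq_cfc']; exact (CFC.sqrt_nonneg A).posSemidef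

lemma Matrix.PosSemidef.eq_sqrt_of_sq_eq {n : Type*} [Fintype n] [DecidableEq n]
    {A B : Matrix n n ℝ} (hA : A.PosSemidef) (hB : B.PosSemidef) (h : A ^ 2 = B) :
    A = hB.sqrt := by
  rw [hB.sqrt_eq_cfc']
  exact (CFC.sqrt_unique (by rw [← pow_two]; exact h) hA.nonneg).symm

end

private lemma aux_ring {R : Type*} [Ring R] (q w t : R)
    (h : t * (w * (q * q) * w) * t = 1) :
    (q * w * t * w * q) ^ 2 = q * (w * w) * q := by
  have e : (q * w * t * w * q) ^ 2
      = q * w * (t * (w * (q * q) * w) * t) * (w * q) := by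
    rw [pow_two]; noncomm_ring
  rw [e, h, mul_one]; noncomm_ring

/-- For n×n real positive definite symmetric matrices `W` and `Q`,
`(Q^{1/2} W Q^{1/2})^{1/2} = Q^{1/2} W^{1/2} (W^{1/2} Q W^{1/2})^{-1/2} W^{1/2} Q^{1/2}`. -/
theorem stmt1 {n : ℕ} (W Q : Matrix (Fin n) (Fin n) ℝ)
    (hW : W.PosDef) (hQ : Q.PosDef)
    (h1 : (hQ.posSemidef.sqrt * W * hQ.posSemidef.sqrt).PosSemidef)
    (h2 : (hW.posSemidef.sqrt * Q * hW.posSemidef.sqrt).PosSemidef) :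
    h1.sqrt =
      hQ.posSemidef.sqrt * hW.posSemidef.sqrt * h2.sqrt⁻¹ *
        hW.posSemidef.sqrt * hQ.posSemidef.sqrt := by
  set q := hQ.posSemidef.sqrt with hqdef
  set w := hW.posSemidef.sqrt with hwdef
  set S := h2.sqrt with hSdef
  have hq2 : q * q = Q := hQ.posSemidef.sqrt_mul_self
  have hw2 : w * w = W := hW.posSemidef.sqrt_mul_self
  have hS2 : S * S = w * Q * w := h2.sqrt_mul_self
  have hqH : qᴴ = q := hQ.posSemidef.posSemidef_sqrt.isHermitian.eq
  have hwH : wᴴ = w := hW.posSemidef.posSemidef_sqrt.isHermitian.eq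
  -- determinants
  have hdetw : w.det ≠ 0 := by
    have : w.det * w.det = W.det := by rw [← det_mul, hw2]
    intro h; rw [h, mul_zero] at this
    exact hW.det_pos.ne' this.symm
  have hdetS : IsUnit S.det := by
    have h1' : S.det * S.det = w.det * Q.det * w.det := by
      rw [← det_mul, hS2, det_mul, det_mul]
    have : S.det ≠ 0 := by
      intro h; rw [h, mul_zero] at h1'
      exact (mul_ne_zero (mul_ne_zero hdetw hQ.det_pos.ne') hdetw) h1'.symm
    exact this.isUnit
  have hSinv : S * S⁻¹ = 1 := mul_nonsing_inv S hdetS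
  have hSinv' : S⁻¹ * S = 1 := nonsing_inv_mul S hdetS
  -- the candidate
  set B := q * w * S⁻¹ * w * q with hBdef
  have hBpsd : B.PosSemidef := by
    have hinv : (S⁻¹).PosSemidef := h2.posSemidef_sqrt.inv
    have := hinv.mul_mul_conjTranspose_same (q * w)
    have hct : (q * w)ᴴ = w * q := by rw [conjTranspose_mul, hqH, hwH]
    rw [hct] at this
    simpa only [hBdef, mul_assoc] using this
  have key : S⁻¹ * (w * (q * q) * w) * S⁻¹ = 1 := by
    rw [hq2, ← hS2, ← mul_assoc, mul_assoc (S⁻¹ * S), hSinv', hSinv, one_mul]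
  have hBsq : B ^ 2 = q * W * q := by
    rw [hBdef, aux_ring q w S⁻¹ key, hw2]
  have := hBpsd.eq_sqrt_of_sq_eq h1 hBsq
  rw [← this, hBdef]
end

section
/- Let H_T ∈ ℝ^{n×n} be positive semidefinite and Π₀ ∈ ℝ^{n×n} (not necessarily symmetric). If H_T^{1/2}(Π₀ + Π₀ᵀ)H_T^{1/2} ≺ 2I, then for every positive semidefinite H ≼ H_T, the matrix I − H^{1/2} Π₀ H^{1/2} is invertible, and hence I − H Π₀ is invertible. -/
open Matrix

lemma aux_posSemidef_sqrt {n : ℕ} {A : Matrix (Fin n) (Fin n) ℝ} (hA : A.PosSemidef) :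
    hA.sqrt.PosSemidef := by
  unfold Matrix.PosSemidef.sqrt
  rw [Matrix.star_eq_conjTranspose]
  refine (PosSemidef.diagonal ?_).mul_mul_conjTranspose_same _
  intro i
  simp [Real.sqrt_nonneg]

lemma aux_sqrt_mul_self {n : ℕ} {A : Matrix (Fin n) (Fin n) ℝ} (hA : A.PosSemidef) :
    hA.sqrt * hA.sqrt = A := by
  unfold Matrix.PosSemidef.sqrt
  have hU : (star hA.1.eigenvectorUnitary : Matrix (Fin n) (Fin n) ℝ) *
      (hA.1.eigenvectorUnitary : Matrix (Fin n) (Fin n) ℝ) = 1 :=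
    Unitary.star_mul_self_of_mem hA.1.eigenvectorUnitary.2
  have hD : diagonal ((↑) ∘ (√·) ∘ hA.1.eigenvalues) * diagonal ((↑) ∘ (√·) ∘ hA.1.eigenvalues)
      = diagonal (RCLike.ofReal ∘ hA.1.eigenvalues : Fin n → ℝ) := by
    rw [diagonal_mul_diagonal]
    congr 1; funext i
    simp [Real.mul_self_sqrt (hA.eigenvalues_nonneg i)]
  conv_rhs => rw [hA.1.spectral_theorem, Unitary.conjStarAlgAut_apply]
  calc _ = (hA.1.eigenvectorUnitary : Matrix (Fin n) (Fin n) ℝ) *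
        diagonal ((↑) ∘ (√·) ∘ hA.1.eigenvalues) *
        ((star hA.1.eigenvectorUnitary : Matrix (Fin n) (Fin n) ℝ) *
        (hA.1.eigenvectorUnitary : Matrix (Fin n) (Fin n) ℝ)) *
        diagonal ((↑) ∘ (√·) ∘ hA.1.eigenvalues) *
        (star hA.1.eigenvectorUnitary : Matrix (Fin n) (Fin n) ℝ) := by simp only [Matrix.mul_assoc]; rfl
    _ = _ := by rw [hU, Matrix.mul_one, Matrix.mul_assoc _ (diagonal _) (diagonal _), hD]

lemma aux_mem_range {n : ℕ} (M : Matrix (Fin n) (Fin n) ℝ) (hM : M.IsHermitian)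
    (y : Fin n → ℝ) (h : ∀ u : Fin n → ℝ, M *ᵥ u = 0 → u ⬝ᵥ y = 0) :
    ∃ x, M *ᵥ x = y := by
  set T := Matrix.toEuclideanLin M with hT
  have hsymm : T.IsSymmetric := (Matrix.isHermitian_iff_isSymmetric).mp hM
  set W : Submodule ℝ (EuclideanSpace ℝ (Fin n)) := LinearMap.range T with hW
  have hy : ((WithLp.equiv 2 (Fin n → ℝ)).symm y) ∈ W := by
    rw [← Submodule.orthogonal_orthogonal W]
    rw [Submodule.mem_orthogonal]
    intro u hu
    have hTu : T u = 0 := by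
      have h1 : inner ℝ (T (T u)) u = (0 : ℝ) := by
        have : T (T u) ∈ W := ⟨T u, rfl⟩
        exact (Submodule.mem_orthogonal W u).mp hu _ this
      have h2 : inner ℝ (T u) (T u) = (0 : ℝ) := (hsymm (T u) u).symm.trans h1
      exact inner_self_eq_zero.mp h2
    have hMu : M *ᵥ (WithLp.equiv 2 (Fin n → ℝ) u) = 0 := by
      have := congrArg (WithLp.equiv 2 (Fin n → ℝ)) hTu
      simpa [hT, Matrix.toEuclideanLin_apply] using this
    have := h _ hMu
    show inner ℝ u ((WithLp.equiv 2 (Fin n → ℝ)).symm y) = (0 : ℝ)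
    rw [PiLp.inner_apply]
    simpa [dotProduct, mul_comm] using this
  obtain ⟨x, hx⟩ := hy
  refine ⟨WithLp.equiv 2 (Fin n → ℝ) x, ?_⟩
  have := congrArg (WithLp.equiv 2 (Fin n → ℝ)) hx
  simpa [hT, Matrix.toEuclideanLin_apply] using this

lemma aux_isUnit_one_sub_swap {A : Type*} [Ring A] {x y : A} (h : IsUnit (1 - x * y)) :
    IsUnit (1 - y * x) := by
  refine ⟨⟨1 - y * x, 1 + y * h.unit.inv * x, ?_, ?_⟩, rfl⟩
  · calc
      (1 - y * x) * (1 + y * (IsUnit.unit h).inv * x) =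
          1 - y * x + y * ((1 - x * y) * h.unit.inv) * x := by noncomm_ring
      _ = 1 := by simp only [Units.inv_eq_val_inv, IsUnit.mul_val_inv, mul_one, sub_add_cancel]
  · calc
      (1 + y * (IsUnit.unit h).inv * x) * (1 - y * x) =
          1 - y * x + y * (h.unit.inv * (1 - x * y)) * x := by noncomm_ring
      _ = 1 := by simp only [Units.inv_eq_val_inv, IsUnit.val_inv_mul, mul_one, sub_add_cancel]

/-- symmetric matrix moves across dot product -/
lemma aux_dot_symm {n : ℕ} {S : Matrix (Fin n) (Fin n) ℝ} (hS : S.IsHermitian)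
    (a b : Fin n → ℝ) : a ⬝ᵥ (S *ᵥ b) = (S *ᵥ a) ⬝ᵥ b := by
  have hSt : Sᵀ = S := by
    ext i j
    have := congrFun (congrFun hS i) j
    simpa using this
  rw [Matrix.dotProduct_mulVec, ← Matrix.mulVec_transpose, hSt]

/-- If `H_T ⪰ 0` and `H_T^{1/2}(Π₀ + Π₀ᵀ)H_T^{1/2} ≺ 2I`, then for every `0 ⪯ H ⪯ H_T`,
both `I − H^{1/2} Π₀ H^{1/2}` and `I − H Π₀` are invertible. -/
theorem stmt11 {n : ℕ} (HT Pi0 : Matrix (Fin n) (Fin n) ℝ)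
    (hHT : HT.PosSemidef)
    (hlt : ((2 : ℝ) • (1 : Matrix (Fin n) (Fin n) ℝ) -
      hHT.sqrt * (Pi0 + Pi0ᵀ) * hHT.sqrt).PosDef) :
    ∀ (H : Matrix (Fin n) (Fin n) ℝ) (hH : H.PosSemidef), (HT - H).PosSemidef →
      IsUnit (1 - hH.sqrt * Pi0 * hH.sqrt) ∧ IsUnit (1 - H * Pi0) := by
  intro H hH hle
  set S := hH.sqrt with hSdef
  have hSps : S.PosSemidef := aux_posSemidef_sqrt hH
  have hSmul : S * S = H := aux_sqrt_mul_self hH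
  set R := hHT.sqrt with hRdef
  have hRps : R.PosSemidef := aux_posSemidef_sqrt hHT
  have hRmul : R * R = HT := aux_sqrt_mul_self hHT
  -- kernel fact
  have hker : ∀ u : Fin n → ℝ, HT *ᵥ u = 0 → S *ᵥ u = 0 := by
    intro u hu
    have h1 : u ⬝ᵥ ((HT - H) *ᵥ u) ≥ 0 := by simpa using hle.dotProduct_mulVec_nonneg u
    have h2 : u ⬝ᵥ (H *ᵥ u) ≥ 0 := by simpa using hH.dotProduct_mulVec_nonneg u
    have h3 : u ⬝ᵥ (HT *ᵥ u) = 0 := by rw [hu, dotProduct_zero]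
    have h4 : u ⬝ᵥ (H *ᵥ u) = 0 := by
      rw [Matrix.sub_mulVec, dotProduct_sub, h3] at h1; linarith
    have h5 : H *ᵥ u = 0 := by
      have := (hH.dotProduct_mulVec_zero_iff u).mp (by simpa using h4)
      exact this
    have h6 : (S *ᵥ u) ⬝ᵥ (S *ᵥ u) = 0 := by
      rw [← aux_dot_symm hSps.1, Matrix.mulVec_mulVec, hSmul, h5, dotProduct_zero]
    exact dotProduct_self_eq_zero.mp h6
  have key : IsUnit (1 - S * Pi0 * S) := by
    by_contra hcon
    have hdet : (1 - S * Pi0 * S).det = 0 := by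
      by_contra hd
      exact hcon ((Matrix.isUnit_iff_isUnit_det _).mpr (isUnit_iff_ne_zero.mpr hd))
    obtain ⟨v, hv0, hv⟩ := (Matrix.exists_mulVec_eq_zero_iff).mpr hdet
    have hfix : S *ᵥ (Pi0 *ᵥ (S *ᵥ v)) = v := by
      have : (1 - S * Pi0 * S) *ᵥ v = v - (S * Pi0 * S) *ᵥ v := by
        rw [Matrix.sub_mulVec, Matrix.one_mulVec]
      rw [this] at hv
      have h7 : (S * Pi0 * S) *ᵥ v = v := by
        have := sub_eq_zero.mp hv; exact this.symm
      rw [Matrix.mulVec_mulVec, Matrix.mulVec_mulVec]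
      exact h7
    set y := S *ᵥ v with hydef
    have hy0 : y ≠ 0 := by
      intro hy
      apply hv0
      rw [← hfix, hy]
      simp
    have h1 : v ⬝ᵥ v = y ⬝ᵥ (Pi0 *ᵥ y) := by
      calc v ⬝ᵥ v = v ⬝ᵥ (S *ᵥ (Pi0 *ᵥ y)) := by rw [hfix]
        _ = (S *ᵥ v) ⬝ᵥ (Pi0 *ᵥ y) := aux_dot_symm hSps.1 v (Pi0 *ᵥ y)
        _ = y ⬝ᵥ (Pi0 *ᵥ y) := by rw [← hydef]
    have h2 : y ⬝ᵥ ((Pi0 + Pi0ᵀ) *ᵥ y) = 2 * (v ⬝ᵥ v) := by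
      rw [Matrix.add_mulVec, dotProduct_add]
      have : y ⬝ᵥ (Pi0ᵀ *ᵥ y) = y ⬝ᵥ (Pi0 *ᵥ y) := by
        rw [Matrix.mulVec_transpose, dotProduct_comm, ← Matrix.dotProduct_mulVec]
      rw [this, ← h1]; ring
    -- find preimage under HT
    obtain ⟨u, hu⟩ := aux_mem_range HT hHT.1 y (by
      intro u hu
      have : S *ᵥ u = 0 := hker u hu
      rw [hydef, aux_dot_symm hSps.1, this, zero_dotProduct])
    set w := R *ᵥ u with hwdef
    have hRw : R *ᵥ w = y := by rw [hwdef, Matrix.mulVec_mulVec, hRmul, hu]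
    have hw0 : w ≠ 0 := by
      intro hw; apply hy0; rw [← hRw, hw]; simp
    have hww : w ⬝ᵥ w = u ⬝ᵥ y := by
      rw [hwdef, ← aux_dot_symm hRps.1, Matrix.mulVec_mulVec, hRmul, hu]
    -- strict inequality from hlt
    have hstrict : v ⬝ᵥ v < w ⬝ᵥ w := by
      have := hlt.dotProduct_mulVec_pos hw0
      have hexp : w ⬝ᵥ (((2 : ℝ) • (1 : Matrix (Fin n) (Fin n) ℝ) -
          R * (Pi0 + Pi0ᵀ) * R) *ᵥ w) =
          2 * (w ⬝ᵥ w) - 2 * (v ⬝ᵥ v) := by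
        rw [Matrix.sub_mulVec, dotProduct_sub]
        have e1 : w ⬝ᵥ (((2 : ℝ) • (1 : Matrix (Fin n) (Fin n) ℝ)) *ᵥ w) = 2 * (w ⬝ᵥ w) := by
          rw [Matrix.smul_mulVec, Matrix.one_mulVec, dotProduct_smul]; simp
        have e2 : w ⬝ᵥ ((R * (Pi0 + Pi0ᵀ) * R) *ᵥ w) = 2 * (v ⬝ᵥ v) := by
          have : (R * (Pi0 + Pi0ᵀ) * R) *ᵥ w = R *ᵥ ((Pi0 + Pi0ᵀ) *ᵥ (R *ᵥ w)) := by
            simp [Matrix.mulVec_mulVec, Matrix.mul_assoc]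
          rw [this, aux_dot_symm hRps.1, hRw, h2]
        rw [e1, e2]
      rw [show star w = w from star_trivial w] at this
      rw [hexp] at this
      linarith
    -- Cauchy-Schwarz side
    have hwsv : w ⬝ᵥ w = (S *ᵥ u) ⬝ᵥ v := by
      rw [hww, hydef, aux_dot_symm hSps.1]
    have hsu : (S *ᵥ u) ⬝ᵥ (S *ᵥ u) ≤ w ⬝ᵥ w := by
      have e1 : (S *ᵥ u) ⬝ᵥ (S *ᵥ u) = u ⬝ᵥ (H *ᵥ u) := by
        rw [← aux_dot_symm hSps.1, Matrix.mulVec_mulVec, hSmul]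
      have e2 : w ⬝ᵥ w = u ⬝ᵥ (HT *ᵥ u) := by
        rw [hwdef, ← aux_dot_symm hRps.1, Matrix.mulVec_mulVec, hRmul]
      have h1' : u ⬝ᵥ ((HT - H) *ᵥ u) ≥ 0 := by simpa using hle.dotProduct_mulVec_nonneg u
      rw [Matrix.sub_mulVec, dotProduct_sub] at h1'
      rw [e1, e2]; linarith
    have hcs : ((S *ᵥ u) ⬝ᵥ v) ^ 2 ≤ ((S *ᵥ u) ⬝ᵥ (S *ᵥ u)) * (v ⬝ᵥ v) := by
      have := Finset.sum_mul_sq_le_sq_mul_sq Finset.univ (S *ᵥ u) v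
      simpa [dotProduct, sq, Finset.mul_sum, mul_pow] using this
    have hvv : 0 ≤ v ⬝ᵥ v := Finset.sum_nonneg fun i _ => mul_self_nonneg (v i)
    nlinarith [hstrict, hwsv, hsu, hcs, hvv]
  refine ⟨key, ?_⟩
  have : IsUnit (1 - (Pi0 * S) * S) := aux_isUnit_one_sub_swap (by
    rw [← Matrix.mul_assoc]; exact key)
  have := aux_isUnit_one_sub_swap (by
    rw [show (Pi0 * S) * S = Pi0 * H by rw [Matrix.mul_assoc, hSmul]] at this
    exact this)
  simpa using this
end
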